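/- Let a_0,...,a_{2^h−1} ∈ {0,1} be an assignment to the monotone sub-balancing formula of height h. If for some 0 < k ≤ h and some 0 ≤ i < 2^{h−k} the number of 1-values among a_{i·2^k},...,a_{(i+1)·2^k−1} is strictly greater than 2^{k−1} and strictly less than 2^k, then the root evaluates to F_1 and the assignment is not accepted. -/

import Mathlib

/-- The 4-letter alphabet `Σ = {0, 1, P, F}` of the balancing formula. -/
inductive Sig4 where
  | zero | one | P | F
deriving DecidableEq

/-- The balancing gate. -/
def bgate : Sig4 → Sig4 → Sig4
  | .zero, .zero => .zero
  | .one, .one => .one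
  | .one, .zero => .P
  | .zero, .one => .P
  | .P, .P => .P
  | _, _ => .F

/-- The value computed at the root of the balancing formula of height `h`
on the Boolean input `a` (read at positions `0, …, 2^h - 1`). -/
def balEval : ℕ → (ℕ → Bool) → Sig4
  | 0, a => if a 0 then .one else .zero
  | h + 1, a => bgate (balEval h a) (balEval h (fun i => a (i + 2 ^ h)))

/-- The number of `1`-values among the first `m` positions of `a`. -/
def ones (m : ℕ) (a : ℕ → Bool) : ℕ :=
  ((Finset.range m).filter (fun j => a j = true)).card
/-- The 5-letter alphabet `Σ = {0, F₀, P, F₁, 1}` (in increasing order). -/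
inductive Sig5 where
  | zero | F0 | P | F1 | one
deriving DecidableEq

/-- The position of a letter in the order `0 < F₀ < P < F₁ < 1`. -/
def Sig5.ord : Sig5 → Fin 5
  | .zero => 0
  | .F0 => 1
  | .P => 2
  | .F1 => 3
  | .one => 4

/-- The monotone balancing gate. -/
def mgate : Sig5 → Sig5 → Sig5
  | .zero, .zero => .zero
  | .one, .one => .one
  | .one, .zero => .P
  | .zero, .one => .P
  | .P, .P => .P
  | .zero, .P => .F0
  | .P, .zero => .F0
  | .one, .P => .F1
  | .P, .one => .F1
  | .P, .F0 => .F0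
  | .F0, .P => .F0
  | .F0, .zero => .F0
  | .zero, .F0 => .F0
  | .F0, .F0 => .F0
  | .F0, .one => .F1
  | .one, .F0 => .F1
  | _, _ => .F1

/-- Identification of `F₀` and `F₁` with the letter `F` of the 4-valued
alphabet. -/
def collapse : Sig5 → Sig4
  | .zero => .zero
  | .one => .one
  | .P => .P
  | .F0 => .F
  | .F1 => .F

/-- The value at the root of the monotone (sub-)balancing formula of height `h`
on Boolean input `a`. -/
def monEval : ℕ → (ℕ → Bool) → Sig5
  | 0, a => if a 0 then .one else .zero
  | h + 1, a => mgate (monEval h a) (monEval h (fun i => a (i + 2 ^ h)))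

lemma ones_le (m : ℕ) (a : ℕ → Bool) : ones m a ≤ m := by
  have := Finset.card_filter_le (Finset.range m) (fun j => a j = true)
  simpa [ones] using this

lemma ones_succ (m : ℕ) (a : ℕ → Bool) :
    ones (m + 1) a = ones m a + (if a m then 1 else 0) := by
  unfold ones
  rw [Finset.range_add_one, Finset.filter_insert]
  split <;> simp_all [Finset.card_insert_of_notMem]

lemma ones_add (m n : ℕ) (a : ℕ → Bool) :
    ones (m + n) a = ones m a + ones n (fun j => a (m + j)) := by
  induction n with
  | zero => simp [ones]
  | succ n ih =>
      rw [← Nat.add_assoc, ones_succ, ih, ones_succ]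
      ring

lemma ones_split (h : ℕ) (a : ℕ → Bool) :
    ones (2 ^ (h + 1)) a = ones (2 ^ h) a + ones (2 ^ h) (fun j => a (j + 2 ^ h)) := by
  have h2 : (2 : ℕ) ^ (h + 1) = 2 ^ h + 2 ^ h := by ring
  have hcomm : (fun j => a (2 ^ h + j)) = (fun j => a (j + 2 ^ h)) := by
    funext j; rw [Nat.add_comm]
  rw [h2, ones_add, hcomm]

lemma ones_one (a : ℕ → Bool) : ones 1 a = if a 0 then 1 else 0 := by
  rw [show (1 : ℕ) = 0 + 1 from rfl, ones_succ]; simp [ones]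

lemma monEval_zero_one (h : ℕ) : ∀ a : ℕ → Bool,
    (monEval h a = .zero ↔ ones (2 ^ h) a = 0) ∧
    (monEval h a = .one ↔ ones (2 ^ h) a = 2 ^ h) := by
  induction h with
  | zero =>
      intro a
      by_cases ha : a 0 <;> simp [monEval, ha, ones_one]
  | succ h ih =>
      intro a
      obtain ⟨hz1, ho1⟩ := ih a
      obtain ⟨hz2, ho2⟩ := ih (fun j => a (j + 2 ^ h))
      have hle1 := ones_le (2 ^ h) a
      have hle2 := ones_le (2 ^ h) (fun j => a (j + 2 ^ h))
      have hp : 0 < 2 ^ h := Nat.pow_pos (by norm_num)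
      have hs := ones_split h a
      have hpow : (2 : ℕ) ^ (h + 1) = 2 ^ h + 2 ^ h := by ring
      rw [monEval]
      rcases e1 : monEval h a <;> rcases e2 : monEval h (fun j => a (j + 2 ^ h)) <;>
        simp_all [mgate] <;> omega
lemma mgate_F1_left (x : Sig5) : mgate .F1 x = .F1 := by cases x <;> rfl
lemma mgate_F1_right (x : Sig5) : mgate x .F1 = .F1 := by cases x <;> rfl

lemma monEval_F1_up (k : ℕ) :
    ∀ h, k ≤ h → ∀ a : ℕ → Bool, ∀ i, i < 2 ^ (h - k) →
      monEval k (fun j => a (i * 2 ^ k + j)) = .F1 → monEval h a = .F1 := by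
  intro h
  induction h with
  | zero =>
      intro hk a i hi hF
      have hk0 : k = 0 := Nat.le_zero.mp hk
      subst hk0
      have hi0 : i = 0 := by simpa using hi
      subst hi0
      have hfun : (fun j => a (0 * 2 ^ 0 + j)) = a := by funext j; simp
      rw [hfun] at hF
      exact hF
  | succ h ih =>
      intro hk a i hi hF
      rcases Nat.lt_or_ge h k with hcase | hcase
      · -- k = h + 1
        have hk1 : k = h + 1 := le_antisymm hk hcase
        subst hk1
        have hi0 : i = 0 := by simpa using hi
        subst hi0
        have hfun : (fun j => a (0 * 2 ^ (h + 1) + j)) = a := by funext j; simp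
        rw [hfun] at hF
        exact hF
      · -- k ≤ h
        have hpow : 2 ^ (h + 1 - k) = 2 ^ (h - k) + 2 ^ (h - k) := by
          rw [Nat.succ_sub hcase, pow_succ]; omega
        rw [monEval]
        rcases Nat.lt_or_ge i (2 ^ (h - k)) with hi' | hi'
        · rw [ih hcase a i hi' hF, mgate_F1_left]
        · have h2h : 2 ^ (h - k) * 2 ^ k = 2 ^ h := by
            rw [← pow_add, Nat.sub_add_cancel hcase]
          have hge : 2 ^ (h - k) * 2 ^ k ≤ i * 2 ^ k := Nat.mul_le_mul_right _ hi'
          have hsub : (i - 2 ^ (h - k)) * 2 ^ k = i * 2 ^ k - 2 ^ (h - k) * 2 ^ k :=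
            Nat.sub_mul _ _ _
          have hfun : (fun j => a ((i - 2 ^ (h - k)) * 2 ^ k + j + 2 ^ h))
              = (fun j => a (i * 2 ^ k + j)) := by
            funext j; congr 1; omega
          have hF' : monEval k (fun j => (fun j' => a (j' + 2 ^ h))
              ((i - 2 ^ (h - k)) * 2 ^ k + j)) = .F1 := by
            show monEval k (fun j => a ((i - 2 ^ (h - k)) * 2 ^ k + j + 2 ^ h)) = .F1
            rw [hfun]; exact hF
          rw [ih hcase (fun j' => a (j' + 2 ^ h)) (i - 2 ^ (h - k)) (by omega) hF',
            mgate_F1_right]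


lemma monEval_F1_of (h : ℕ) : ∀ a : ℕ → Bool,
    2 ^ (h - 1) < ones (2 ^ h) a → ones (2 ^ h) a < 2 ^ h → monEval h a = .F1 := by
  induction h with
  | zero =>
      intro a h1 h2
      simp at h1 h2
      omega
  | succ h ih =>
      intro a h1 h2
      simp only [Nat.add_sub_cancel] at h1
      have hs := ones_split h a
      have hle1 := ones_le (2 ^ h) a
      have hle2 := ones_le (2 ^ h) (fun j => a (j + 2 ^ h))
      obtain ⟨hz1, ho1⟩ := monEval_zero_one h a
      obtain ⟨hz2, ho2⟩ := monEval_zero_one h (fun j => a (j + 2 ^ h))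
      have hpow1 : (2 : ℕ) ^ (h + 1) = 2 ^ h + 2 ^ h := by ring
      rcases Nat.eq_zero_or_pos h with rfl | hhp
      · have e0 : (2 : ℕ) ^ 0 = 1 := rfl
        have e1 : (2 : ℕ) ^ (0 + 1) = 2 := rfl
        omega
      · have hpow : (2 : ℕ) ^ h = 2 ^ (h - 1) + 2 ^ (h - 1) := by
          have e : h = h - 1 + 1 := by omega
          conv_lhs => rw [e]
          rw [pow_succ]; omega
        have hq : 0 < 2 ^ (h - 1) := Nat.pow_pos (by norm_num)
        rw [monEval]
        rcases Nat.lt_or_ge (2 ^ (h - 1)) (ones (2 ^ h) a) with hm | hm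
        · rcases Nat.lt_or_ge (ones (2 ^ h) a) (2 ^ h) with hm2 | hm2
          · rw [ih a hm hm2, mgate_F1_left]
          · have hm3 : ones (2 ^ h) a = 2 ^ h := le_antisymm hle1 hm2
            rw [ho1.mpr hm3]
            rcases e2 : monEval h (fun j => a (j + 2 ^ h)) with _ | _ | _ | _ | _
            · exact absurd (hz2.mp e2) (by omega)
            · rfl
            · rfl
            · rfl
            · exact absurd (ho2.mp e2) (by omega)
        · have hn : 2 ^ (h - 1) < ones (2 ^ h) (fun j => a (j + 2 ^ h)) := by omega
          rcases Nat.lt_or_ge (ones (2 ^ h) (fun j => a (j + 2 ^ h))) (2 ^ h) with hn2 | hn2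
          · rw [ih (fun j => a (j + 2 ^ h)) hn hn2, mgate_F1_right]
          · have hn3 : ones (2 ^ h) (fun j => a (j + 2 ^ h)) = 2 ^ h :=
              le_antisymm hle2 hn2
            rw [ho2.mpr hn3]
            rcases e1 : monEval h a with _ | _ | _ | _ | _
            · exact absurd (hz1.mp e1) (by omega)
            · rfl
            · rfl
            · rfl
            · exact absurd (ho1.mp e1) (by omega)

/-- if in some block of length `2^k` (`0 < k ≤ h`) the number
of `1`-values is strictly between `2^{k-1}` and `2^k`, then the root of the
monotone sub-balancing formula evaluates to `F₁`, hence the assignment is not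
accepted (acceptance requires the root value to be neither `F₁` nor `1`). -/
theorem monotone_subbalancing_reject (h k i : ℕ) (hk : 0 < k) (hkh : k ≤ h)
    (hi : i < 2 ^ (h - k)) (a : ℕ → Bool)
    (hlo : 2 ^ (k - 1) < ones (2 ^ k) (fun j => a (i * 2 ^ k + j)))
    (hhi : ones (2 ^ k) (fun j => a (i * 2 ^ k + j)) < 2 ^ k) :
    monEval h a = Sig5.F1 ∧ ¬ (monEval h a ≠ Sig5.F1 ∧ monEval h a ≠ Sig5.one) := by
  have hF : monEval k (fun j => a (i * 2 ^ k + j)) = .F1 :=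
    monEval_F1_of k (fun j => a (i * 2 ^ k + j)) hlo hhi
  have hroot : monEval h a = Sig5.F1 := monEval_F1_up k h hkh a i hi hF
  exact ⟨hroot, by simp [hroot]⟩
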